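/- Let A be an antimatroid on finite set Q, (B, q) a prime implicate of A, and x ∈ B. Then the set (B ∪ {q}) \ {x} is free in A. -/

import Mathlib

variable {α : Type*} [DecidableEq α] [Fintype α]

/-- A family of subsets is union-closed. -/
def UnionClosed (K : Set (Finset α)) : Prop :=
  ∀ X ∈ K, ∀ Y ∈ K, X ∪ Y ∈ K

/-- There is a tight path in `K` from `S` to `T`: a chain of members of `K`
each obtained from the previous by adding exactly one element. -/
def TightPath (K : Set (Finset α)) (S T : Finset α) : Prop :=
  ∃ (k : ℕ) (Y : ℕ → Finset α), Y 0 = S ∧ Y k = T ∧ (∀ i ≤ k, Y i ∈ K) ∧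
    ∀ i < k, Y i ⊆ Y (i + 1) ∧ (Y (i + 1) \ Y i).card = 1

/-- The family of members of `K` reachable from `∅` by a tight path in `K`. -/
def checkFam (K : Set (Finset α)) : Set (Finset α) :=
  {X | X ∈ K ∧ TightPath K ∅ X}

/-- Accessibility: every nonempty member can lose some element and stay in the family. -/
def Accessible (K : Set (Finset α)) : Prop :=
  ∀ X ∈ K, X ≠ ∅ → ∃ x ∈ X, X.erase x ∈ K

/-- An antimatroid: contains `∅`, union-closed, and accessible. -/
def IsAntimatroid (K : Set (Finset α)) : Prop :=
  ∅ ∈ K ∧ UnionClosed K ∧ Accessible K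

/-- A Horn rule `(A, q)` accepts `X` if `q ∈ X` implies `X ∩ A ≠ ∅`. -/
def Accepts (r : Finset α × α) (X : Finset α) : Prop :=
  r.2 ∈ X → (X ∩ r.1).Nonempty

/-- The union-closed family determined by a set of Horn rules. -/
def KFam (R : Set (Finset α × α)) : Set (Finset α) :=
  {X | ∀ r ∈ R, Accepts r X}

/-- The maximal antimatroid contained in `KFam R`. -/
def AFam (R : Set (Finset α × α)) : Set (Finset α) :=
  checkFam (KFam R)

/-- A rule is an implicate of a family if it accepts every member. -/
def Implicate (K : Set (Finset α)) (r : Finset α × α) : Prop :=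
  ∀ X ∈ K, Accepts r X

/-- `X` is free in the family `A` if every subset of `X` is a trace of a member of `A`. -/
def FreeIn (A : Set (Finset α)) (X : Finset α) : Prop :=
  ∀ S ⊆ X, ∃ K ∈ A, X ∩ K = S

/-- A circuit: not free, but every proper subset is free. -/
def IsCircuit (A : Set (Finset α)) (C : Finset α) : Prop :=
  ¬ FreeIn A C ∧ ∀ C' ⊂ C, FreeIn A C'

theorem stmt13 (A : Set (Finset α)) (hA : IsAntimatroid A)
    (B : Finset α) (q : α) (hq : q ∉ B)
    (himp : Implicate A (B, q))
    (hprime : ∀ a ∈ B, ¬ Implicate A (B.erase a, q))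
    (x : α) (hx : x ∈ B) :
    FreeIn A ((insert q B).erase x) := by
  classical
  obtain ⟨hempty, hUC, hacc⟩ := hA
  -- Step 1: witnesses of primality
  have hK : ∀ a ∈ B, ∃ K ∈ A, q ∈ K ∧ K ∩ B = {a} := by
    intro a ha
    have h := hprime a ha
    simp only [Implicate, not_forall] at h
    obtain ⟨K, hKA, hKacc⟩ := h
    have hKacc' : q ∈ K ∧ (K ∩ B.erase a) = ∅ := by
      by_contra hcon
      apply hKacc
      intro hqK
      push_neg at hcon
      rcases Finset.eq_empty_or_nonempty (K ∩ B.erase a) with he | hne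
      · exact absurd he (Finset.nonempty_iff_ne_empty.mp (hcon hqK))
      · exact hne
    obtain ⟨hqK, hKe⟩ := hKacc'
    refine ⟨K, hKA, hqK, ?_⟩
    have hne : (K ∩ B).Nonempty := himp K hKA hqK
    apply Finset.Subset.antisymm
    · intro b hb
      simp only [Finset.mem_inter] at hb
      simp only [Finset.mem_singleton]
      by_contra hba
      have : b ∈ K ∩ B.erase a := Finset.mem_inter.mpr ⟨hb.1, Finset.mem_erase.mpr ⟨hba, hb.2⟩⟩
      rw [hKe] at this
      exact absurd this (Finset.notMem_empty b)
    · intro b hb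
      rw [Finset.mem_singleton] at hb
      obtain ⟨c, hc⟩ := hne
      have hca : c = a := by
        by_contra hca
        have hcB := (Finset.mem_inter.mp hc).2
        have : c ∈ K ∩ B.erase a :=
          Finset.mem_inter.mpr ⟨(Finset.mem_inter.mp hc).1, Finset.mem_erase.mpr ⟨hca, hcB⟩⟩
        rw [hKe] at this
        exact absurd this (Finset.notMem_empty c)
      rw [hb]
      exact hca ▸ hc
  choose! k hkA hkq hkB using hK
  -- Step 2: descent lemma
  have hdesc : ∀ K ∈ A, q ∈ K → ∃ Z ∈ A, Z ⊆ K ∧ q ∉ Z ∧ insert q Z ∈ A := by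
    intro K
    induction K using Finset.strongInduction with
    | _ K ih =>
      intro hKA hqK
      have hne : K ≠ ∅ := Finset.ne_empty_of_mem hqK
      obtain ⟨y, hy, hyA⟩ := hacc K hKA hne
      by_cases hyq : y = q
      · subst hyq
        exact ⟨K.erase y, hyA, Finset.erase_subset _ _, Finset.notMem_erase _ _,
          by rwa [Finset.insert_erase hqK]⟩
      · have hq' : q ∈ K.erase y := Finset.mem_erase.mpr ⟨fun h => hyq h.symm, hqK⟩
        obtain ⟨Z, hZA, hZsub, hqZ, hins⟩ := ih (K.erase y) (Finset.erase_ssubset hy) hyA hq'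
        exact ⟨Z, hZA, hZsub.trans (Finset.erase_subset _ _), hqZ, hins⟩
  -- Step 3: witnesses without q
  have hW : ∀ a ∈ B, ∃ W ∈ A, a ∈ W ∧ q ∉ W ∧ W ⊆ k a := by
    intro a ha
    obtain ⟨Z, hZA, hZsub, hqZ, hins⟩ := hdesc (k a) (hkA a ha) (hkq a ha)
    refine ⟨Z, hZA, ?_, hqZ, hZsub⟩
    obtain ⟨b, hb⟩ := himp (insert q Z) hins (Finset.mem_insert_self _ _)
    obtain ⟨hb1, hb2⟩ := Finset.mem_inter.mp hb
    rcases Finset.mem_insert.mp hb1 with hbq | hbZ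
    · exact absurd (hbq ▸ hb2) hq
    · have : b ∈ k a ∩ B := Finset.mem_inter.mpr ⟨hZsub hbZ, hb2⟩
      rw [hkB a ha] at this
      rw [Finset.mem_singleton] at this
      exact this ▸ hbZ
  choose! w hwA hwa hwq hwk using hW
  -- Step 4: finite unions stay in A
  have hsup : ∀ (T : Finset α) (f : α → Finset α), (∀ a ∈ T, f a ∈ A) → T.sup f ∈ A := by
    intro T f
    induction T using Finset.induction with
    | empty => intro _; simpa using hempty
    | insert _ _ h ih =>
      intro hf
      rw [Finset.sup_insert]
      have h1 := hf _ (Finset.mem_insert_self _ _)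
      have h2 := ih fun a ha => hf a (Finset.mem_insert_of_mem ha)
      have := hUC _ h1 _ h2
      simpa [Finset.sup_eq_union] using this
  -- element-in-own-witness facts
  have hak : ∀ a ∈ B, a ∈ k a := by
    intro a ha
    have : a ∈ k a ∩ B := by rw [hkB a ha]; exact Finset.mem_singleton_self a
    exact (Finset.mem_inter.mp this).1
  have hmemB : ∀ y ∈ (insert q B).erase x, y ≠ q → y ∈ B := by
    intro y hy hyq
    obtain ⟨_, hy2⟩ := Finset.mem_erase.mp hy
    rcases Finset.mem_insert.mp hy2 with h | h
    · exact absurd h hyq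
    · exact h
  intro S hS
  by_cases hqS : q ∈ S
  · -- use K = k x ∪ ⋃_{a ∈ S \ {q}} k a
    have hSB : ∀ a ∈ S.erase q, a ∈ B := fun a ha =>
      hmemB a (hS (Finset.mem_of_mem_erase ha)) (Finset.mem_erase.mp ha).1
    refine ⟨k x ∪ (S.erase q).sup k, hUC _ (hkA x hx) _ (hsup _ _ fun a ha => hkA a (hSB a ha)), ?_⟩
    ext y
    simp only [Finset.mem_inter, Finset.mem_erase, Finset.mem_insert, Finset.mem_union,
      Finset.mem_sup]
    constructor
    · rintro ⟨⟨hyx, hyqB⟩, hyK⟩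
      rcases hyqB with hyq | hyB
      · exact hyq ▸ hqS
      · rcases hyK with hyk | ⟨a, haS, hya⟩
        · exfalso
          have : y ∈ k x ∩ B := Finset.mem_inter.mpr ⟨hyk, hyB⟩
          rw [hkB x hx] at this
          exact hyx (Finset.mem_singleton.mp this)
        · have : y ∈ k a ∩ B := Finset.mem_inter.mpr ⟨hya, hyB⟩
          rw [hkB a (hSB a (Finset.mem_erase.mpr haS))] at this
          exact (Finset.mem_singleton.mp this) ▸ haS.2
    · intro hyS
      have hyX := hS hyS
      obtain ⟨hyx, hyqB⟩ := Finset.mem_erase.mp hyX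
      refine ⟨⟨hyx, Finset.mem_insert.mp hyqB⟩, ?_⟩
      by_cases hyq : y = q
      · exact Or.inl (hyq ▸ hkq x hx)
      · have hyB : y ∈ B := hmemB y hyX hyq
        exact Or.inr ⟨y, ⟨hyq, hyS⟩, hak y hyB⟩
  · -- use K = ⋃_{a ∈ S} w a
    have hSB : ∀ a ∈ S, a ∈ B := fun a ha =>
      hmemB a (hS ha) (fun h => hqS (h ▸ ha))
    refine ⟨S.sup w, hsup _ _ fun a ha => hwA a (hSB a ha), ?_⟩
    ext y
    simp only [Finset.mem_inter, Finset.mem_erase, Finset.mem_insert, Finset.mem_sup]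
    constructor
    · rintro ⟨⟨hyx, hyqB⟩, a, haS, hya⟩
      have hyq : y ≠ q := fun h => hwq a (hSB a haS) (h ▸ hya)
      have hyB : y ∈ B := by
        rcases hyqB with h | h
        · exact absurd h hyq
        · exact h
      have : y ∈ k a ∩ B := Finset.mem_inter.mpr ⟨hwk a (hSB a haS) hya, hyB⟩
      rw [hkB a (hSB a haS)] at this
      exact (Finset.mem_singleton.mp this) ▸ haS
    · intro hyS
      obtain ⟨hyx, hyqB⟩ := Finset.mem_erase.mp (hS hyS)
      exact ⟨⟨hyx, Finset.mem_insert.mp hyqB⟩, y, hyS, hwa y (hSB y hyS)⟩
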